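/- arXiv:1610.04826 — 6 statements merged into one kernel-verified Lean document; each statement's English description precedes it below -/
import Mathlib

section
/- For every positive integer n, the Möbius function satisfies μ(n) = Σ_{k=0}^{⌊log₂ n⌋} (−1)^k f_k(n), where f_k(n) = f_k(n,2). -/
open Finset

/-- `f k n l` is the number of ordered `k`-tuples `(i₁, …, i_k)` of integers
with each `i_j ≥ l` and `i₁ ⋯ i_k = n`.  (For `n ≥ 1` and `l ≥ 1` every such
factor lies in `[l, n]`, and for `k = 0` this gives `1` if `n = 1` and `0` otherwise.) -/
def f (k n l : ℕ) : ℕ :=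
  ((Fintype.piFinset fun _ : Fin k => Finset.Icc l n).filter
    fun v => ∏ i, v i = n).card

/-- `F k x l = ∑_{n ≤ x} f k n l`; it equals `0` for `x < 1` and `F 0 x l = 1` for `x ≥ 1`. -/
noncomputable def F (k : ℕ) (x : ℝ) (l : ℕ) : ℕ :=
  ∑ n ∈ Finset.Icc 1 ⌊x⌋₊, f k n l

lemma f_zero (n : ℕ) : f 0 n 2 = if n = 1 then 1 else 0 := by
  simp only [f, eq_comm]
  split <;> simp_all

lemma f_eq_zero_of_lt {k n : ℕ} (h : n < 2 ^ k) : f k n 2 = 0 := by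
  rw [f, Finset.card_eq_zero, Finset.filter_eq_empty_iff]
  intro v hv hvn
  rw [Fintype.mem_piFinset] at hv
  have : (2 : ℕ) ^ k ≤ ∏ i, v i := by
    calc (2:ℕ)^k = ∏ _i : Fin k, 2 := by simp
    _ ≤ ∏ i, v i := Finset.prod_le_prod' fun i _ => (Finset.mem_Icc.mp (hv i)).1
  omega

lemma f_succ (k n : ℕ) (hn : 0 < n) :
    f (k+1) n 2 = ∑ d ∈ n.divisors.filter (fun d => 2 ≤ d), f k (n / d) 2 := by
  rw [f, Finset.card_eq_sum_card_fiberwise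
      (f := fun v => v 0) (t := n.divisors.filter fun d => 2 ≤ d) ?_]
  · apply Finset.sum_congr rfl
    intro d hd
    obtain ⟨hd', hd2⟩ := Finset.mem_filter.mp hd
    obtain ⟨hdvd, hn0⟩ := Nat.mem_divisors.mp hd'
    have hdpos : 0 < d := by omega
    have hql : 1 ≤ n / d := (Nat.one_le_div_iff hdpos).mpr (Nat.le_of_dvd hn hdvd)
    rw [f, Finset.filter_filter]
    refine Finset.card_bij' (fun v _ => Fin.tail v) (fun w _ => Fin.cons d w)
      ?_ ?_ ?_ ?_
    · intro v hv
      obtain ⟨hv1, hv2, hv3⟩ := Finset.mem_filter.mp hv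
      rw [Fintype.mem_piFinset] at hv1
      have hprod : d * ∏ i : Fin k, Fin.tail v i = n := by
        rw [← hv3, ← hv2]; exact (Fin.prod_univ_succ v).symm
      have htp : ∏ i : Fin k, Fin.tail v i = n / d :=
        (Nat.div_eq_of_eq_mul_left hdpos (by rw [mul_comm]; exact hprod.symm)).symm
      rw [Finset.mem_filter, Fintype.mem_piFinset]
      refine ⟨fun i => ?_, htp⟩
      have h2 : 2 ≤ Fin.tail v i := (Finset.mem_Icc.mp (hv1 i.succ)).1
      have hdv : Fin.tail v i ∣ n / d := htp ▸ Finset.dvd_prod_of_mem _ (Finset.mem_univ i)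
      exact Finset.mem_Icc.mpr ⟨h2, Nat.le_of_dvd (by omega) hdv⟩
    · intro w hw
      obtain ⟨hw1, hw2⟩ := Finset.mem_filter.mp hw
      rw [Fintype.mem_piFinset] at hw1
      have hmem : ∀ i : Fin (k+1), (Fin.cons (α := fun _ => ℕ) d w) i ∈ Icc 2 n := by
        intro i
        refine Fin.cases ?_ ?_ i
        · simpa using Finset.mem_Icc.mpr ⟨hd2, Nat.le_of_dvd hn hdvd⟩
        · intro j
          have := Finset.mem_Icc.mp (hw1 j)
          simp only [Fin.cons_succ]
          exact Finset.mem_Icc.mpr ⟨this.1, this.2.trans (Nat.div_le_self n d)⟩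
      have hprod : (∏ i : Fin (k+1), (Fin.cons (α := fun _ => ℕ) d w) i) = n ∧ (Fin.cons (α := fun _ => ℕ) d w) 0 = d := by
        refine ⟨?_, rfl⟩
        rw [Fin.prod_univ_succ]
        simp only [Fin.cons_zero, Fin.cons_succ]
        rw [hw2]
        exact Nat.mul_div_cancel' hdvd
      exact Finset.mem_filter.mpr ⟨Fintype.mem_piFinset.mpr hmem, hprod⟩
    · intro v hv
      obtain ⟨_, _, hv3⟩ := Finset.mem_filter.mp hv
      show Fin.cons d (Fin.tail v) = v
      rw [← hv3]; exact Fin.cons_self_tail v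
    · intro w _
      exact Fin.tail_cons (α := fun _ => ℕ) d w
  · intro v hv
    obtain ⟨hv1, hv2⟩ := Finset.mem_filter.mp hv
    rw [Fintype.mem_piFinset] at hv1
    have h2 : 2 ≤ v 0 := (Finset.mem_Icc.mp (hv1 0)).1
    have hdvd : v 0 ∣ n := hv2 ▸ Finset.dvd_prod_of_mem _ (Finset.mem_univ 0)
    exact Finset.mem_filter.mpr ⟨Nat.mem_divisors.mpr ⟨hdvd, by omega⟩, h2⟩

lemma sum_trunc (n K : ℕ) (hn : 0 < n) (hK : Nat.log 2 n ≤ K) :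
    ∑ k ∈ range (K+1), (-1:ℤ)^k * f k n 2
      = ∑ k ∈ range (Nat.log 2 n + 1), (-1:ℤ)^k * f k n 2 := by
  symm
  apply Finset.sum_subset (Finset.range_subset_range.mpr (by omega))
  intro k hk hk2
  simp only [Finset.mem_range] at hk hk2
  have hlt : Nat.log 2 n < k := by omega
  have : n < 2 ^ k := (Nat.log_lt_iff_lt_pow one_lt_two (by omega)).mp hlt
  simp [f_eq_zero_of_lt this]

lemma main_eq (n : ℕ) : 0 < n →
    (∑ k ∈ range (Nat.log 2 n + 1), (-1:ℤ)^k * f k n 2)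
      = ArithmeticFunction.moebius n := by
  induction n using Nat.strong_induction_on with
  | _ n ih =>
  intro hn
  by_cases h1 : n = 1
  · subst h1
    simp [f_zero, Nat.log_one_right]
  · have h2 : 2 ≤ n := by omega
    have hLpos : 0 < Nat.log 2 n := Nat.log_pos one_lt_two h2
    set L := Nat.log 2 n with hL
    set D := n.divisors.filter (fun d => 2 ≤ d) with hD
    have hsum : ∑ d ∈ n.divisors, (ArithmeticFunction.moebius d : ℤ) = 0 := by
      have h := ArithmeticFunction.moebius_mul_coe_zeta
      have h2' : (ArithmeticFunction.moebius * ↑ArithmeticFunction.zeta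
          : ArithmeticFunction ℤ) n = (1 : ArithmeticFunction ℤ) n := by rw [h]
      rw [ArithmeticFunction.coe_mul_zeta_apply, ArithmeticFunction.one_apply] at h2'
      simpa [h1] using h2'
    have hdivsum : ∑ d ∈ n.divisors, (ArithmeticFunction.moebius (n / d) : ℤ) = 0 := by
      rw [Nat.sum_div_divisors]; exact hsum
    have hDerase : D = n.divisors.erase 1 := by
      ext d
      simp only [hD, Finset.mem_filter, Finset.mem_erase, Nat.mem_divisors]
      constructor
      · rintro ⟨⟨hd, hn0⟩, hd2⟩; exact ⟨by omega, hd, hn0⟩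
      · rintro ⟨hne, hd, hn0⟩
        have : d ≠ 0 := by rintro rfl; exact hn0 (Nat.eq_zero_of_zero_dvd hd)
        exact ⟨⟨hd, hn0⟩, by omega⟩
    have h1mem : (1 : ℕ) ∈ n.divisors := Nat.one_mem_divisors.mpr (by omega)
    have hErase : ∑ d ∈ D, (ArithmeticFunction.moebius (n / d) : ℤ)
        = -ArithmeticFunction.moebius n := by
      rw [hDerase]
      have := Finset.add_sum_erase n.divisors
        (fun d => (ArithmeticFunction.moebius (n / d) : ℤ)) h1mem
      simp only [Nat.div_one] at this
      omega
    calc ∑ k ∈ range (L+1), (-1:ℤ)^k * f k n 2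
        = (∑ k ∈ range L, (-1:ℤ)^(k+1) * f (k+1) n 2) + (-1:ℤ)^0 * f 0 n 2 :=
          Finset.sum_range_succ' _ L
      _ = ∑ k ∈ range L, (-1:ℤ)^(k+1) * f (k+1) n 2 := by simp [f_zero, h1]
      _ = ∑ k ∈ range L, ∑ d ∈ D, -((-1:ℤ)^k * f k (n/d) 2) := by
          apply Finset.sum_congr rfl
          intro k _
          rw [f_succ k n hn, ← hD, Nat.cast_sum, Finset.mul_sum]
          apply Finset.sum_congr rfl
          intro d _
          ring
      _ = -∑ d ∈ D, ∑ k ∈ range L, (-1:ℤ)^k * f k (n/d) 2 := by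
          rw [Finset.sum_comm]
          simp [Finset.sum_neg_distrib]
      _ = -∑ d ∈ D, (ArithmeticFunction.moebius (n/d) : ℤ) := by
          congr 1
          apply Finset.sum_congr rfl
          intro d hd
          obtain ⟨hd', hd2⟩ := Finset.mem_filter.mp hd
          obtain ⟨hdvd, hn0⟩ := Nat.mem_divisors.mp hd'
          have hndpos : 0 < n / d :=
            (Nat.one_le_div_iff (by omega)).mpr (Nat.le_of_dvd hn hdvd)
          have hlog : Nat.log 2 (n / d) ≤ L - 1 := by
            have hle : n / d ≤ n / 2 := Nat.div_le_div_left hd2 (by omega)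
            have hmono : Nat.log 2 (n / d) ≤ Nat.log 2 (n / 2) := Nat.log_mono_right hle
            have hdb : Nat.log 2 (n / 2) = Nat.log 2 n - 1 := Nat.log_div_base 2 n
            omega
          have hndlt : n / d < n := Nat.div_lt_self hn (by omega)
          rw [show L = (L-1)+1 by omega, sum_trunc (n/d) (L-1) hndpos hlog]
          exact ih (n/d) hndlt hndpos
      _ = ArithmeticFunction.moebius n := by rw [hErase]; ring

theorem stmt7 (n : ℕ) (hn : 0 < n) :
    ArithmeticFunction.moebius n =
      ∑ k ∈ Finset.range (Nat.log 2 n + 1), (-1 : ℤ) ^ k * (f k n 2 : ℤ) :=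
  (main_eq n hn).symm
end

section
/- For every real x ≥ 1, the Mertens function satisfies M(x) = Σ_{n ≤ x} μ(n) = Σ_{k=0}^{⌊log₂ x⌋} (−1)^k F_k(x), where F_k(x) = F_k(x,2). -/
open Finset

/-- The arithmetic function which is `1` on `n ≥ 2` and `0` elsewhere. -/
def g : ArithmeticFunction ℤ := ⟨fun n => if 2 ≤ n then 1 else 0, by norm_num⟩

lemma g_apply (n : ℕ) : g n = if 2 ≤ n then 1 else 0 := rfl

lemma negf_apply (h : ArithmeticFunction ℤ) (n : ℕ) : (-h) n = -(h n) := rfl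

lemma subf_apply (h₁ h₂ : ArithmeticFunction ℤ) (n : ℕ) : (h₁ - h₂) n = h₁ n - h₂ n := by
  rw [sub_eq_add_neg, ArithmeticFunction.add_apply, negf_apply, sub_eq_add_neg]

lemma sumf_apply {ι : Type*} (s : Finset ι) (φ : ι → ArithmeticFunction ℤ) (n : ℕ) :
    (∑ i ∈ s, φ i) n = ∑ i ∈ s, φ i n := by
  induction s using Finset.cons_induction with
  | empty => simp
  | cons a s ha ih => rw [Finset.sum_cons, Finset.sum_cons, ArithmeticFunction.add_apply, ih]

lemma zeta_eq_one_add_g : (ArithmeticFunction.zeta : ArithmeticFunction ℤ) = 1 + g := by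
  ext n
  simp only [ArithmeticFunction.natCoe_apply, ArithmeticFunction.zeta_apply,
    ArithmeticFunction.add_apply, ArithmeticFunction.one_apply, g_apply]
  rcases n with _ | _ | n <;> simp

lemma extend (k m n : ℕ) (hm : 1 ≤ m) (hmn : m ≤ n) :
    ((Fintype.piFinset fun _ : Fin k => Finset.Icc 2 n).filter
      fun v => ∏ i, v i = m).card = f k m 2 := by
  unfold f
  congr 1
  ext v
  simp only [Finset.mem_filter, Fintype.mem_piFinset, Finset.mem_Icc]
  constructor
  · rintro ⟨hv, hprod⟩
    refine ⟨fun i => ⟨(hv i).1, ?_⟩, hprod⟩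
    have : v i ∣ m := hprod ▸ Finset.dvd_prod_of_mem v (Finset.mem_univ i)
    exact Nat.le_of_dvd hm this
  · rintro ⟨hv, hprod⟩
    exact ⟨fun i => ⟨(hv i).1, (hv i).2.trans hmn⟩, hprod⟩

lemma f_succ_s8 (k n : ℕ) (hn : 1 ≤ n) :
    f (k + 1) n 2 = ∑ p ∈ n.divisorsAntidiagonal, if 2 ≤ p.1 then f k p.2 2 else 0 := by
  conv_lhs => rw [f]
  rw [Finset.card_eq_sum_card_fiberwise
    (f := fun v => (v 0, ∏ i : Fin k, v i.succ)) (t := n.divisorsAntidiagonal)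
    (fun v hv => by
      simp only [Finset.mem_coe, Finset.mem_filter] at hv
      show _ ∈ n.divisorsAntidiagonal
      rw [Nat.mem_divisorsAntidiagonal]
      exact ⟨by rw [← hv.2, Fin.prod_univ_succ], by omega⟩)]
  refine Finset.sum_congr rfl fun p hp => ?_
  rw [Nat.mem_divisorsAntidiagonal] at hp
  obtain ⟨a, b⟩ := p
  simp only at hp ⊢
  have hab : a * b = n := hp.1
  have ha1 : 1 ≤ a := Nat.pos_of_ne_zero fun h => by subst h; simp at hab; omega
  have hb1 : 1 ≤ b := Nat.pos_of_ne_zero fun h => by subst h; simp at hab; omega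
  have han : a ≤ n := Nat.le_of_dvd hn ⟨b, hab.symm⟩
  have hbn : b ≤ n := Nat.le_of_dvd hn ⟨a, by rw [mul_comm]; exact hab.symm⟩
  by_cases ha : 2 ≤ a
  · rw [if_pos ha, ← extend k b n hb1 hbn]
    apply Finset.card_bij' (fun v _ => Fin.tail v) (fun w _ => Fin.cons a w)
    · intro w hw
      simp only [Finset.mem_filter, Fintype.mem_piFinset] at hw ⊢
      obtain ⟨hw1, hw2⟩ := hw
      refine ⟨⟨fun i => ?_, ?_⟩, ?_⟩
      · rcases Fin.eq_zero_or_eq_succ i with rfl | ⟨j, rfl⟩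
        · simpa [Finset.mem_Icc] using ⟨ha, han⟩
        · simpa using hw1 j
      · rw [Fin.prod_univ_succ]
        simp [Fin.cons_succ, hw2, hab]
      · simp [Fin.cons_succ, hw2]
    · intro v hv
      simp only [Finset.mem_filter] at hv
      rw [Prod.mk.injEq] at hv
      rw [← hv.2.1]
      exact Fin.cons_self_tail v
    · intro w hw
      funext i
      exact Fin.cons_succ (α := fun _ : Fin (k+1) => ℕ) a w i
    · intro v hv
      simp only [Finset.mem_filter, Fintype.mem_piFinset] at hv ⊢
      obtain ⟨⟨hv1, _⟩, hv2⟩ := hv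
      rw [Prod.mk.injEq] at hv2
      exact ⟨fun i => hv1 i.succ, hv2.2⟩
  · rw [if_neg ha]
    rw [Finset.card_eq_zero, Finset.filter_eq_empty_iff]
    intro v hv
    simp only [Finset.mem_filter, Fintype.mem_piFinset, Finset.mem_Icc] at hv
    intro h
    rw [Prod.mk.injEq] at h
    have := (hv.1 0).1
    omega

lemma f_eq_pow (k : ℕ) : ∀ n, 1 ≤ n → (f k n 2 : ℤ) = (g ^ k) n := by
  induction k with
  | zero =>
    intro n hn
    rw [f_zero, pow_zero, ArithmeticFunction.one_apply]
    split_ifs <;> simp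
  | succ k ih =>
    intro n hn
    rw [pow_succ', ArithmeticFunction.mul_apply, f_succ_s8 k n hn, Nat.cast_sum]
    refine Finset.sum_congr rfl fun p hp => ?_
    rw [Nat.mem_divisorsAntidiagonal] at hp
    have hp2 : 1 ≤ p.2 := Nat.pos_of_ne_zero fun h => by
      obtain ⟨h1, h2⟩ := hp; rw [h] at h1; simp at h1; omega
    rw [g_apply]
    split_ifs with h
    · rw [one_mul]; exact ih p.2 hp2
    · simp

lemma f_vanish (k n : ℕ) (hn : 1 ≤ n) (h : n < 2 ^ k) : f k n 2 = 0 := by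
  unfold f
  rw [Finset.card_eq_zero, Finset.filter_eq_empty_iff]
  intro v hv
  simp only [Fintype.mem_piFinset, Finset.mem_Icc] at hv
  intro hprod
  have : (2 : ℕ) ^ k ≤ ∏ i, v i := by
    calc (2:ℕ) ^ k = ∏ _i : Fin k, 2 := by simp
    _ ≤ ∏ i, v i := Finset.prod_le_prod' fun i _ => (hv i).1
  omega

lemma pow_vanish (k n : ℕ) (h : n < 2 ^ k) : (g ^ k) n = 0 := by
  rcases Nat.eq_zero_or_pos n with rfl | hn
  · simp
  · rw [← f_eq_pow k n hn, f_vanish k n hn h]; rfl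

lemma neg_pow_vanish (k n : ℕ) (h : n < 2 ^ k) : ((-g) ^ k) n = 0 := by
  rcases Nat.even_or_odd k with he | ho
  · rw [he.neg_pow]; exact pow_vanish k n h
  · rw [ho.neg_pow, negf_apply, pow_vanish k n h, neg_zero]

lemma neg_pow_apply (k n : ℕ) : ((-g) ^ k) n = (-1) ^ k * (g ^ k) n := by
  rcases Nat.even_or_odd k with he | ho
  · rw [he.neg_pow, he.neg_one_pow, one_mul]
  · rw [ho.neg_pow, ho.neg_one_pow, negf_apply, neg_one_mul]

lemma mu_eq (K n : ℕ) (hn : 1 ≤ n) (h : n < 2 ^ (K + 1)) :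
    (ArithmeticFunction.moebius n : ℤ) =
      ∑ k ∈ Finset.range (K + 1), (-1 : ℤ) ^ k * (f k n 2 : ℤ) := by
  set h₀ : ArithmeticFunction ℤ := ∑ k ∈ Finset.range (K + 1), (-g) ^ k with hh
  have key : h₀ * (1 + g) = 1 - (-g) ^ (K + 1) := by
    have := geom_sum_mul (-g) (K + 1)
    have h2 : h₀ * (-g - 1) = (-g) ^ (K + 1) - 1 := this
    have : h₀ * (1 + g) = -(h₀ * (-g - 1)) := by ring
    rw [this, h2]; ring
  have hz : h₀ = ArithmeticFunction.moebius * (1 - (-g) ^ (K + 1)) := by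
    calc h₀ = h₀ * ((1 + g) * ArithmeticFunction.moebius) := by
            rw [← zeta_eq_one_add_g, ArithmeticFunction.coe_zeta_mul_moebius, mul_one]
      _ = ArithmeticFunction.moebius * (h₀ * (1 + g)) := by ring
      _ = _ := by rw [key]
  have heval : h₀ n = ArithmeticFunction.moebius n := by
    rw [hz, mul_sub, mul_one, subf_apply, ArithmeticFunction.mul_apply]
    have : ∑ p ∈ n.divisorsAntidiagonal,
        (ArithmeticFunction.moebius p.1 : ℤ) * ((-g) ^ (K + 1)) p.2 = 0 := by
      refine Finset.sum_eq_zero fun p hp => ?_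
      rw [Nat.mem_divisorsAntidiagonal] at hp
      have : p.2 ≤ n := Nat.le_of_dvd hn ⟨p.1, by rw [mul_comm]; exact hp.1.symm⟩
      rw [neg_pow_vanish (K + 1) p.2 (by omega), mul_zero]
    rw [this, sub_zero]
  rw [← heval, hh, sumf_apply]
  exact Finset.sum_congr rfl fun k _ => by rw [neg_pow_apply, f_eq_pow k n hn]

theorem stmt8 (x : ℝ) (hx : 1 ≤ x) :
    ∑ n ∈ Finset.Icc 1 ⌊x⌋₊, ArithmeticFunction.moebius n =
      ∑ k ∈ Finset.range (⌊Real.logb 2 x⌋₊ + 1), (-1 : ℤ) ^ k * (F k x 2 : ℤ) := by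
  set K := ⌊Real.logb 2 x⌋₊ with hK
  have hfloor : ⌊x⌋₊ < 2 ^ (K + 1) := by
    have h1 : Real.logb 2 x < (K + 1 : ℕ) := by
      push_cast
      exact Nat.lt_floor_add_one _
    have h2 : x < (2 : ℝ) ^ ((K + 1 : ℕ) : ℝ) := by
      rw [← Real.logb_lt_iff_lt_rpow (by norm_num) (by linarith)]
      exact h1
    rw [Real.rpow_natCast] at h2
    have h3 : (⌊x⌋₊ : ℝ) ≤ x := Nat.floor_le (by linarith)
    have : (⌊x⌋₊ : ℝ) < ((2 ^ (K + 1) : ℕ) : ℝ) := by push_cast; linarith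
    exact_mod_cast this
  have lhs : ∑ n ∈ Finset.Icc 1 ⌊x⌋₊, (ArithmeticFunction.moebius n : ℤ) =
      ∑ n ∈ Finset.Icc 1 ⌊x⌋₊, ∑ k ∈ Finset.range (K + 1), (-1 : ℤ) ^ k * (f k n 2 : ℤ) := by
    refine Finset.sum_congr rfl fun n hn => ?_
    rw [Finset.mem_Icc] at hn
    exact mu_eq K n hn.1 (by omega)
  rw [lhs, Finset.sum_comm]
  refine Finset.sum_congr rfl fun k _ => ?_
  rw [F, Nat.cast_sum, Finset.mul_sum]
end

section
/- For all positive integers n, k, l, f_k(n,l) = Σ_{i=0, l^i | n}^{k} C(k,i) · f_{k−i}(n/l^i, l+1), where the sum runs over those 0 ≤ i ≤ k for which l^i divides n. -/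
open Finset

lemma fiber_eq_zero (k i n l : ℕ) (hn : 0 < n) (T : Finset (Fin k))
    (hT : T.card = i) (hd : ¬ l ^ i ∣ n) :
    (((Fintype.piFinset fun _ : Fin k => Finset.Icc l n).filter
        fun v => ∏ j, v j = n).filter
      fun v => (Finset.univ.filter fun j => v j = l) = T).card = 0 := by
  rw [Finset.card_eq_zero, Finset.filter_eq_empty_iff]
  rintro v hv hvT
  simp only [Finset.mem_filter, Fintype.mem_piFinset] at hv
  apply hd
  have hvl : ∀ j ∈ T, v j = l := by
    intro j hj
    have := Finset.ext_iff.1 hvT j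
    simp only [Finset.mem_filter, Finset.mem_univ, true_and] at this
    exact this.2 hj
  have hprodT : ∏ j ∈ T, v j = l ^ i := by
    rw [Finset.prod_congr rfl hvl, Finset.prod_const, hT]
  have := Finset.prod_mul_prod_compl T v
  rw [hprodT, hv.2] at this
  exact ⟨_, this.symm⟩

lemma fiber_card (k i n l : ℕ) (hn : 0 < n) (hl : 0 < l) (T : Finset (Fin k))
    (hT : T.card = i) (hd : l ^ i ∣ n) :
    (((Fintype.piFinset fun _ : Fin k => Finset.Icc l n).filter
        fun v => ∏ j, v j = n).filter
      fun v => (Finset.univ.filter fun j => v j = l) = T).card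
    = f (k - i) (n / l ^ i) (l + 1) := by
  set m := n / l ^ i with hm
  have hlipos : 0 < l ^ i := Nat.pow_pos hl
  have hlm : l ^ i * m = n := Nat.mul_div_cancel' hd
  have hmpos : 0 < m := by
    rcases Nat.eq_zero_or_pos m with h | h
    · rw [h, mul_zero] at hlm; omega
    · exact h
  have hmn : m ∣ n := ⟨l ^ i, by rw [mul_comm]; exact hlm.symm⟩
  have hc : Tᶜ.card = k - i := by
    rw [Finset.card_compl, hT, Fintype.card_fin]
  let e : ↥(Tᶜ : Finset (Fin k)) ≃ Fin (k - i) := Tᶜ.equivFin.trans (finCongr hc)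
  rw [f]
  apply Finset.card_nbij' (fun v j => v ((e.symm j : ↥(Tᶜ : Finset (Fin k))) : Fin k))
    (fun w j => if h : j ∈ Tᶜ then w (e ⟨j, h⟩) else l)
  · -- forward maps into target
    intro v hv
    simp only [Finset.mem_coe, Finset.mem_filter, Fintype.mem_piFinset] at hv ⊢
    obtain ⟨⟨hvmem, hvprod⟩, hvT⟩ := hv
    have hiffT : ∀ j, j ∈ T ↔ v j = l := by
      intro j
      have := Finset.ext_iff.1 hvT j
      simp only [Finset.mem_filter, Finset.mem_univ, true_and] at this
      exact this.symm
    have hprodT : ∏ j ∈ T, v j = l ^ i := by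
      rw [Finset.prod_congr rfl (fun j hj => (hiffT j).1 hj), Finset.prod_const, hT]
    have hsplit := Finset.prod_mul_prod_compl T v
    rw [hprodT, hvprod] at hsplit
    have hprodC : ∏ j ∈ Tᶜ, v j = m :=
      Nat.eq_of_mul_eq_mul_left hlipos (by rw [hsplit, hlm])
    constructor
    · intro j
      set a := e.symm j
      have ha : (a : Fin k) ∈ Tᶜ := a.2
      have hna : (a : Fin k) ∉ T := Finset.mem_compl.1 ha
      have hge : l ≤ v a := (Finset.mem_Icc.1 (hvmem a)).1
      have hne : v a ≠ l := fun h => hna ((hiffT _).2 h)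
      have hdvd : v a ∣ m := hprodC ▸ Finset.dvd_prod_of_mem v ha
      exact Finset.mem_Icc.2 ⟨by omega, Nat.le_of_dvd hmpos hdvd⟩
    · calc ∏ j, v ((e.symm j : ↥(Tᶜ : Finset (Fin k))) : Fin k)
          = ∏ a : ↥(Tᶜ : Finset (Fin k)), v a := Equiv.prod_comp e.symm (fun a => v (a : Fin k))
        _ = ∏ j ∈ Tᶜ, v j := Finset.prod_coe_sort _ _
        _ = m := hprodC
  · -- backward maps into source
    intro w hw
    simp only [Finset.mem_coe, Finset.mem_filter, Fintype.mem_piFinset, Finset.mem_Icc] at hw ⊢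
    obtain ⟨hwmem, hwprod⟩ := hw
    have hvT' : ∀ j : Fin k, (if h : j ∈ Tᶜ then w (e ⟨j, h⟩) else l) = l ↔ j ∈ T := by
      intro j
      by_cases h : j ∈ Tᶜ
      · rw [dif_pos h]
        have := (hwmem (e ⟨j, h⟩)).1
        have hj := Finset.mem_compl.1 h
        constructor
        · intro he; omega
        · intro hj'; exact absurd hj' hj
      · rw [dif_neg h]
        simp only [Finset.mem_compl, not_not] at h
        exact ⟨fun _ => h, fun _ => rfl⟩
    refine ⟨⟨?_, ?_⟩, ?_⟩
    · intro j
      by_cases h : j ∈ Tᶜ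
      · rw [dif_pos h]
        have h1 := (hwmem (e ⟨j, h⟩)).1
        have h2 := (hwmem (e ⟨j, h⟩)).2
        exact ⟨by omega, le_trans h2 (Nat.le_of_dvd hn hmn)⟩
      · rw [dif_neg h]
        simp only [Finset.mem_compl, not_not] at h
        have hi : i ≠ 0 := by
          intro hi0
          rw [hi0, Finset.card_eq_zero] at hT
          simp [hT] at h
        refine ⟨le_refl l, ?_⟩
        calc l ≤ l ^ i := Nat.le_self_pow hi l
          _ ≤ n := Nat.le_of_dvd hn hd
    · rw [← Finset.prod_mul_prod_compl T]
      have h1 : ∏ j ∈ T, (if h : j ∈ Tᶜ then w (e ⟨j, h⟩) else l) = l ^ i := by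
        rw [Finset.prod_congr rfl (fun j hj => dif_neg (by simpa using hj)),
          Finset.prod_const, hT]
      have h2 : ∏ j ∈ Tᶜ, (if h : j ∈ Tᶜ then w (e ⟨j, h⟩) else l) = m := by
        rw [← Finset.prod_coe_sort Tᶜ]
        have : ∀ a : ↥(Tᶜ : Finset (Fin k)),
            (if h : (a : Fin k) ∈ Tᶜ then w (e ⟨a, h⟩) else l) = w (e a) := by
          intro a; rw [dif_pos a.2]
        rw [Finset.prod_congr rfl (fun a _ => this a), Equiv.prod_comp e w, hwprod]
      rw [h1, h2, hlm]
    · ext j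
      simp only [Finset.mem_filter, Finset.mem_univ, true_and]
      exact hvT' j
  · -- left inverse
    intro v hv
    simp only [Finset.mem_coe, Finset.mem_filter, Fintype.mem_piFinset] at hv
    obtain ⟨⟨hvmem, hvprod⟩, hvT⟩ := hv
    funext j
    beta_reduce
    by_cases h : j ∈ Tᶜ
    · rw [dif_pos h]
      exact congrArg (fun a : ↥(Tᶜ : Finset (Fin k)) => v (a : Fin k)) (e.symm_apply_apply ⟨j, h⟩)
    · rw [dif_neg h]
      simp only [Finset.mem_compl, not_not] at h
      have := Finset.ext_iff.1 hvT j
      simp only [Finset.mem_filter, Finset.mem_univ, true_and] at this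
      exact (this.2 h).symm
  · -- right inverse
    intro w hw
    funext j
    simp only [Finset.coe_mem, Subtype.coe_eta, dif_pos, Equiv.apply_symm_apply]

theorem stmt10 (n k l : ℕ) (hn : 0 < n) (hk : 0 < k) (hl : 0 < l) :
    f k n l =
      ∑ i ∈ (Finset.range (k + 1)).filter (fun i => l ^ i ∣ n),
        Nat.choose k i * f (k - i) (n / l ^ i) (l + 1) := by
  rw [f]
  rw [Finset.card_eq_sum_card_fiberwise
    (f := fun v : Fin k → ℕ => Finset.univ.filter fun j => v j = l)
    (t := (Finset.univ : Finset (Fin k)).powerset)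
    (fun v _ => Finset.mem_powerset.2 (Finset.subset_univ _))]
  rw [Finset.sum_powerset]
  rw [Finset.card_univ, Fintype.card_fin]
  rw [Finset.sum_filter]
  apply Finset.sum_congr rfl
  intro i hi
  have hsum : ∀ T ∈ Finset.powersetCard i (Finset.univ : Finset (Fin k)),
      (((Fintype.piFinset fun _ : Fin k => Finset.Icc l n).filter
          fun v => ∏ j, v j = n).filter
        fun v => (Finset.univ.filter fun j => v j = l) = T).card
      = if l ^ i ∣ n then f (k - i) (n / l ^ i) (l + 1) else 0 := by
    intro T hT
    have hTc : T.card = i := Finset.mem_powersetCard_univ.1 hT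
    by_cases hd : l ^ i ∣ n
    · rw [if_pos hd]; exact fiber_card k i n l hn hl T hTc hd
    · rw [if_neg hd]; exact fiber_eq_zero k i n l hn T hTc hd
  rw [Finset.sum_congr rfl hsum, Finset.sum_const, Finset.card_powersetCard,
    Finset.card_univ, Fintype.card_fin, smul_eq_mul]
  by_cases hd : l ^ i ∣ n
  · rw [if_pos hd, if_pos hd]
  · rw [if_neg hd, if_neg hd, mul_zero]
end

section
/- For every real x ≥ 1 and all positive integers k, l, F_k(x,l) = Σ_{i=0}^{k} C(k,i) · F_{k−i}(x/l^i, l+1). -/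
open Finset

/-- Auxiliary: number of tuples with entries in `[l, N]` and product at most `N`. -/
def G (k N l : ℕ) : ℕ :=
  ((Fintype.piFinset fun _ : Fin k => Finset.Icc l N).filter
    fun v => ∏ i, v i ≤ N).card

lemma F_eq_G (k N l : ℕ) (hl : 1 ≤ l) (hN : 1 ≤ N) :
    (∑ n ∈ Finset.Icc 1 N, f k n l) = G k N l := by
  have hfib : ∀ n ∈ Finset.Icc 1 N,
      f k n l = (((Fintype.piFinset fun _ : Fin k => Finset.Icc l N).filter
        fun v => ∏ i, v i ≤ N).filter (fun v => ∏ i, v i = n)).card := by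
    intro n hn
    rw [Finset.mem_Icc] at hn
    unfold f
    congr 1
    ext v
    simp only [Finset.mem_filter, Fintype.mem_piFinset, Finset.mem_Icc]
    constructor
    · rintro ⟨hmem, hprod⟩
      exact ⟨⟨fun i => ⟨(hmem i).1, (hmem i).2.trans hn.2⟩, hprod ▸ hn.2⟩, hprod⟩
    · rintro ⟨⟨hmem, -⟩, hprod⟩
      refine ⟨fun i => ⟨(hmem i).1, ?_⟩, hprod⟩
      calc v i ≤ ∏ j, v j := Finset.single_le_prod'
            (fun j _ => hl.trans (hmem j).1) (Finset.mem_univ i)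
        _ = n := hprod
  rw [Finset.sum_congr rfl hfib]
  unfold G
  rw [← Finset.card_eq_sum_card_fiberwise]
  intro v hv
  rw [Finset.mem_coe, Finset.mem_filter] at hv
  rw [Finset.mem_coe, Finset.mem_Icc]
  refine ⟨Finset.one_le_prod' fun i _ => ?_, hv.2⟩
  exact hl.trans (Fintype.mem_piFinset.1 hv.1 i |> Finset.mem_Icc.1).1

/-- The set counted by the `i`-th term on the right, reindexed to the common bound `N`. -/
def H (k N l i : ℕ) : ℕ :=
  ((Fintype.piFinset fun _ : Fin (k - i) => Finset.Icc (l + 1) N).filter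
    fun w => l ^ i * ∏ j, w j ≤ N).card

lemma card_fiber (k N l i : ℕ) (hl : 1 ≤ l) (S : Finset (Fin k)) (hS : S.card = i) :
    (((Fintype.piFinset fun _ : Fin k => Finset.Icc l N).filter
        fun v => ∏ j, v j ≤ N).filter
      (fun v => Finset.univ.filter (fun j => v j = l) = S)).card = H k N l i := by
  have hcard : (Sᶜ : Finset (Fin k)).card = k - i := by
    rw [Finset.card_compl, hS, Fintype.card_fin]
  let e : {x // x ∈ (Sᶜ : Finset (Fin k))} ≃ Fin (k - i) :=
    (Sᶜ : Finset (Fin k)).equivFin.trans (finCongr hcard)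
  unfold H
  refine Finset.card_bij' (fun v _ => fun a => v (e.symm a))
    (fun w _ => fun j => if hj : j ∈ (Sᶜ : Finset (Fin k)) then w (e ⟨j, hj⟩) else l)
    ?_ ?_ ?_ ?_
  · -- forward map lands in target
    intro v hv
    simp only [Finset.mem_filter, Fintype.mem_piFinset, Finset.mem_Icc] at hv ⊢
    obtain ⟨⟨hmem, hprod⟩, hSv⟩ := hv
    have hvl : ∀ j, v j = l ↔ j ∈ S := by
      intro j
      rw [← hSv, Finset.mem_filter]
      simp
    have hcompl : ∀ j ∈ (Sᶜ : Finset (Fin k)), l + 1 ≤ v j := by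
      intro j hj
      rw [Finset.mem_compl, ← hvl] at hj
      exact lt_of_le_of_ne (hmem j).1 (Ne.symm hj)
    have hkey : ∏ j, v j = l ^ i * ∏ a, v (e.symm a) := by
      rw [← Finset.prod_mul_prod_compl S v]
      congr 1
      · rw [Finset.prod_congr rfl (fun j hj => (hvl j).2 hj), Finset.prod_const, hS]
      · rw [Equiv.prod_comp e.symm (fun j : {x // x ∈ (Sᶜ : Finset (Fin k))} => v j),
          Finset.prod_coe_sort]
    constructor
    · intro a
      have hj := (e.symm a).2
      refine ⟨hcompl _ hj, (hmem _).2⟩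
    · rw [← hkey]; exact hprod
  · -- backward map lands in source
    intro w hw
    simp only [Finset.mem_filter, Fintype.mem_piFinset, Finset.mem_Icc] at hw ⊢
    obtain ⟨hmem, hprod⟩ := hw
    have hleN : ∀ j, (if hj : j ∈ (Sᶜ : Finset (Fin k)) then w (e ⟨j, hj⟩) else l) ≤ N ∧
        l ≤ (if hj : j ∈ (Sᶜ : Finset (Fin k)) then w (e ⟨j, hj⟩) else l) := by
      intro j
      by_cases hj : j ∈ (Sᶜ : Finset (Fin k))
      · simp only [hj, dif_pos]
        exact ⟨(hmem _).2, le_trans (Nat.le_succ l) (hmem _).1⟩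
      · rw [dif_neg hj]
        -- l ≤ N : since j ∉ Sᶜ, S is nonempty, so i ≥ 1, and l ≤ l^i ≤ N
        have hjS : j ∈ S := by rwa [Finset.mem_compl, not_not] at hj
        have hi : i ≠ 0 := by
          rintro rfl
          rw [Finset.card_eq_zero] at hS
          simp [hS] at hjS
        refine ⟨?_, le_refl l⟩
        calc l ≤ l ^ i := Nat.le_self_pow hi l
          _ ≤ l ^ i * ∏ a, w a := Nat.le_mul_of_pos_right _
              (Finset.prod_pos fun a _ => lt_of_lt_of_le (Nat.succ_pos l) (hmem a).1)
          _ ≤ N := hprod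
    have hkey : ∏ j, (if hj : j ∈ (Sᶜ : Finset (Fin k)) then w (e ⟨j, hj⟩) else l)
        = l ^ i * ∏ a, w a := by
      rw [← Finset.prod_mul_prod_compl S]
      congr 1
      · rw [Finset.prod_congr rfl (fun j hj => ?_), Finset.prod_const, hS]
        have : j ∉ (Sᶜ : Finset (Fin k)) := by simpa using hj
        simp [this]
      · rw [← Finset.prod_coe_sort (Sᶜ : Finset (Fin k))]
        rw [← Equiv.prod_comp e.symm]
        refine Finset.prod_congr rfl fun a _ => ?_
        have hj := (e.symm a).2
        simp only [hj, dif_pos]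
        congr 1
        · exact congrArg e (Subtype.ext rfl) |>.trans (e.apply_symm_apply a)
    refine ⟨⟨fun j => ⟨(hleN j).2, (hleN j).1⟩, hkey ▸ hprod⟩, ?_⟩
    ext j
    simp only [Finset.mem_filter, Finset.mem_univ, true_and]
    by_cases hj : j ∈ (Sᶜ : Finset (Fin k))
    · simp only [hj, dif_pos]
      have : j ∉ S := Finset.mem_compl.1 hj
      simp only [this, iff_false]
      have := (hmem (e ⟨j, hj⟩)).1
      omega
    · have hjS : j ∈ S := by rwa [Finset.mem_compl, not_not] at hj
      simp [hj, hjS]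
  · -- left inverse
    intro v hv
    simp only [Finset.mem_filter] at hv
    have hSv := hv.2
    funext j
    by_cases hj : j ∈ (Sᶜ : Finset (Fin k))
    · simp only [hj, dif_pos]
      congr 1
      exact congrArg Subtype.val (e.symm_apply_apply ⟨j, hj⟩)
    · simp only [hj, dif_neg]
      have hjS : j ∈ S := by rwa [Finset.mem_compl, not_not] at hj
      rw [← hSv, Finset.mem_filter] at hjS
      exact hjS.2.symm
  · -- right inverse
    intro w hw
    funext a
    have hj := (e.symm a).2
    simp only [hj, dif_pos]
    congr 1
    exact congrArg e (Subtype.ext rfl) |>.trans (e.apply_symm_apply a)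

lemma G_eq_sum (k N l : ℕ) (hl : 1 ≤ l) :
    G k N l = ∑ i ∈ Finset.range (k + 1), Nat.choose k i * H k N l i := by
  unfold G
  rw [Finset.card_eq_sum_card_fiberwise
    (f := fun v => Finset.univ.filter (fun j => v j = l))
    (t := (Finset.univ : Finset (Fin k)).powerset)
    (fun v _ => Finset.mem_powerset.2 (Finset.filter_subset _ _))]
  rw [Finset.sum_powerset]
  rw [Finset.card_univ, Fintype.card_fin]
  refine Finset.sum_congr rfl fun i hi => ?_
  rw [Finset.sum_congr rfl (fun S hS => card_fiber k N l i hl S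
    (Finset.mem_powersetCard.1 hS).2), Finset.sum_const, Finset.card_powersetCard,
    Finset.card_univ, Fintype.card_fin, smul_eq_mul]

lemma H_eq_F (x : ℝ) (hx : 1 ≤ x) (k l i : ℕ) (hl : 1 ≤ l) :
    H k ⌊x⌋₊ l i = F (k - i) (x / (l : ℝ) ^ i) (l + 1) := by
  have hlpos : (0 : ℝ) < (l : ℝ) ^ i := by positivity
  have hdivnonneg : (0 : ℝ) ≤ x / (l : ℝ) ^ i := by positivity
  have hcond : ∀ m : ℕ, (l ^ i * m ≤ ⌊x⌋₊ ↔ m ≤ ⌊x / (l : ℝ) ^ i⌋₊) := by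
    intro m
    rw [Nat.le_floor_iff hdivnonneg, Nat.le_floor_iff (le_trans zero_le_one hx),
      le_div_iff₀ hlpos]
    push_cast
    rw [mul_comm]
  set M := ⌊x / (l : ℝ) ^ i⌋₊ with hM
  by_cases hM0 : M = 0
  · -- both sides zero
    have : H k ⌊x⌋₊ l i = 0 := by
      unfold H
      rw [Finset.card_eq_zero]
      rw [Finset.filter_eq_empty_iff]
      intro w hw
      simp only [Fintype.mem_piFinset, Finset.mem_Icc] at hw
      intro hle
      have h1 : 1 ≤ ∏ j, w j :=
        Finset.one_le_prod' fun j _ => le_trans (by omega) (hw j).1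
      have : l ^ i * 1 ≤ ⌊x⌋₊ := le_trans (by exact Nat.mul_le_mul_left _ h1) hle
      rw [hcond 1] at this
      omega
    rw [this]
    unfold F
    rw [← hM, hM0]
    simp
  · have hM1 : 1 ≤ M := Nat.one_le_iff_ne_zero.2 hM0
    have hMN : M ≤ ⌊x⌋₊ := by
      have := (hcond M).2 le_rfl
      calc M = 1 * M := (one_mul M).symm
        _ ≤ l ^ i * M := Nat.mul_le_mul_right _ (Nat.one_le_iff_ne_zero.2 (by positivity))
        _ ≤ ⌊x⌋₊ := this
    unfold F
    rw [← hM, F_eq_G _ _ _ (by omega) hM1]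
    unfold H G
    congr 1
    ext w
    simp only [Finset.mem_filter, Fintype.mem_piFinset, Finset.mem_Icc]
    constructor
    · rintro ⟨hmem, hprod⟩
      rw [hcond] at hprod
      refine ⟨fun j => ⟨(hmem j).1, ?_⟩, hprod⟩
      calc w j ≤ ∏ a, w a := Finset.single_le_prod'
            (fun a _ => le_trans (by omega) (hmem a).1) (Finset.mem_univ j)
        _ ≤ M := hprod
    · rintro ⟨hmem, hprod⟩
      exact ⟨fun j => ⟨(hmem j).1, le_trans (hmem j).2 hMN⟩, (hcond _).2 hprod⟩

theorem stmt11 (x : ℝ) (hx : 1 ≤ x) (k l : ℕ) (hk : 0 < k) (hl : 0 < l) :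
    F k x l =
      ∑ i ∈ Finset.range (k + 1),
        Nat.choose k i * F (k - i) (x / (l : ℝ) ^ i) (l + 1) := by
  have hN : 1 ≤ ⌊x⌋₊ := Nat.one_le_floor_iff x |>.2 hx
  rw [show F k x l = ∑ n ∈ Finset.Icc 1 ⌊x⌋₊, f k n l from rfl,
    F_eq_G k ⌊x⌋₊ l hl hN, G_eq_sum k ⌊x⌋₊ l hl]
  refine Finset.sum_congr rfl fun i _ => ?_
  rw [H_eq_F x hx k l i hl]
end

section
/- For all positive integers n, l and every integer k ≥ 2, f_k(n,l) = Σ_{m=l}^{⌊n^{1/k}⌋} Σ_{i=1, m^i | n}^{k} C(k,i) · f_{k−i}(n/m^i, m+1), where the inner sum runs over those 1 ≤ i ≤ k for which m^i divides n. -/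
open Finset

lemma f_card_eq (α : Type) [Fintype α] [DecidableEq α] (n l : ℕ) :
    ((Fintype.piFinset fun _ : α => Finset.Icc l n).filter
      fun v => ∏ i, v i = n).card = f (Fintype.card α) n l := by
  classical
  let e := Fintype.equivFin α
  unfold f
  apply Finset.card_bij (fun v _ => v ∘ e.symm)
  · intro v hv
    simp only [mem_filter, Fintype.mem_piFinset] at hv ⊢
    refine ⟨fun i => hv.1 _, ?_⟩
    rw [← hv.2]
    exact Equiv.prod_comp e.symm v
  · intro v hv v' hv' h
    funext a
    have := congrFun h (e a)
    simpa using this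
  · intro w hw
    refine ⟨w ∘ e, ?_, ?_⟩
    · simp only [mem_filter, Fintype.mem_piFinset] at hw ⊢
      refine ⟨fun i => hw.1 _, ?_⟩
      rw [← hw.2]
      exact Equiv.prod_comp e w
    · funext j; simp

theorem stmt12 (n l k : ℕ) (hn : 0 < n) (hl : 0 < l) (hk : 2 ≤ k) :
    f k n l =
      ∑ m ∈ Finset.Icc l ⌊(n : ℝ) ^ (1 / (k : ℝ))⌋₊,
        ∑ i ∈ (Finset.Icc 1 k).filter (fun i => m ^ i ∣ n),
          Nat.choose k i * f (k - i) (n / m ^ i) (m + 1) := by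
  classical
  have hk0 : 0 < k := by omega
  have hne : Nonempty (Fin k) := ⟨⟨0, hk0⟩⟩
  set M := ⌊(n : ℝ) ^ (1 / (k : ℝ))⌋₊ with hM
  set T := (Fintype.piFinset fun _ : Fin k => Finset.Icc l n).filter
    (fun v => ∏ i, v i = n) with hT
  set μ : (Fin k → ℕ) → ℕ := fun v => univ.inf' univ_nonempty v with hμ
  -- facts about members of T
  have hTmem : ∀ v ∈ T, (∀ j, l ≤ v j ∧ v j ≤ n) ∧ ∏ i, v i = n := by
    intro v hv
    simp only [hT, mem_filter, Fintype.mem_piFinset, mem_Icc] at hv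
    exact ⟨fun j => hv.1 j, hv.2⟩
  have hμle : ∀ (v : Fin k → ℕ) (j : Fin k), μ v ≤ v j := fun v j =>
    inf'_le v (mem_univ j)
  have hμmem : ∀ v ∈ T, μ v ∈ Finset.Icc l M := by
    intro v hv
    obtain ⟨h1, h2⟩ := hTmem v hv
    rw [mem_Icc]
    constructor
    · exact le_inf' _ _ fun j _ => (h1 j).1
    · have hpow : (μ v) ^ k ≤ n := by
        calc (μ v) ^ k = (μ v) ^ (univ : Finset (Fin k)).card := by
              rw [card_univ, Fintype.card_fin]
          _ ≤ ∏ i, v i := Finset.pow_card_le_prod _ _ _ (fun j _ => hμle v j)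
          _ = n := h2
      rw [hM]
      apply Nat.le_floor
      have h0 : (0:ℝ) ≤ (μ v : ℝ) := Nat.cast_nonneg _
      have hcast : ((μ v : ℝ)) ^ k ≤ (n : ℝ) := by exact_mod_cast hpow
      calc (μ v : ℝ) = (((μ v : ℝ)) ^ k) ^ ((k:ℝ)⁻¹) := by
            rw [Real.pow_rpow_inv_natCast h0 hk0.ne']
        _ ≤ (n:ℝ) ^ ((k:ℝ)⁻¹) := Real.rpow_le_rpow (by positivity) hcast (by positivity)
        _ = (n:ℝ) ^ (1/(k:ℝ)) := by rw [one_div]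
  rw [show f k n l = T.card from rfl,
    Finset.card_eq_sum_card_fiberwise hμmem]
  apply Finset.sum_congr rfl
  intro m hm
  rw [mem_Icc] at hm
  have hm0 : 0 < m := lt_of_lt_of_le hl hm.1
  -- fiber by number of coordinates equal to m
  set ci : (Fin k → ℕ) → ℕ := fun v => (univ.filter fun j => v j = m).card with hci
  have hcimem : ∀ v ∈ T.filter (fun v => μ v = m),
      ci v ∈ (Finset.Icc 1 k).filter (fun i => m ^ i ∣ n) := by
    intro v hv
    rw [mem_filter] at hv
    obtain ⟨hvT, hvμ⟩ := hv
    obtain ⟨h1, h2⟩ := hTmem v hvT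
    have hSne : (univ.filter fun j => v j = m).Nonempty := by
      obtain ⟨j, _, hj⟩ := exists_mem_eq_inf' (univ_nonempty) v
      exact ⟨j, mem_filter.2 ⟨mem_univ _, by rw [← hj, ← hvμ]⟩⟩
    have hprodS : ∏ j ∈ (univ.filter fun j => v j = m), v j = m ^ ci v :=
      Finset.prod_eq_pow_card (fun j hj => (mem_filter.1 hj).2)
    refine mem_filter.2 ⟨mem_Icc.2 ⟨card_pos.2 hSne, ?_⟩, ?_⟩
    · exact (card_filter_le _ _).trans (by rw [card_univ, Fintype.card_fin])
    · rw [← h2, ← hprodS]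
      exact Finset.prod_dvd_prod_of_subset _ _ _ (filter_subset _ _)
  rw [Finset.card_eq_sum_card_fiberwise hcimem]
  apply Finset.sum_congr rfl
  intro i hi
  rw [mem_filter, mem_Icc] at hi
  obtain ⟨⟨hi1, hik⟩, hdvd⟩ := hi
  have hmpow : 0 < m ^ i := Nat.pow_pos hm0
  -- fiber by the set of coordinates equal to m
  set Sv : (Fin k → ℕ) → Finset (Fin k) := fun v => univ.filter fun j => v j = m
    with hSv
  have hSvmem : ∀ v ∈ (T.filter (fun v => μ v = m)).filter (fun v => ci v = i),
      Sv v ∈ powersetCard i (univ : Finset (Fin k)) := by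
    intro v hv
    rw [mem_filter] at hv
    exact mem_powersetCard_univ.2 hv.2
  rw [Finset.card_eq_sum_card_fiberwise hSvmem]
  have key : ∀ S ∈ powersetCard i (univ : Finset (Fin k)),
      (((T.filter (fun v => μ v = m)).filter (fun v => ci v = i)).filter
        (fun v => Sv v = S)).card = f (k - i) (n / m ^ i) (m + 1) := by
    intro S hS
    have hScard : S.card = i := mem_powersetCard_univ.1 hS
    have hSc : (Sᶜ : Finset (Fin k)).card = k - i := by
      rw [card_compl, hScard, Fintype.card_fin]
    have hcardc : Fintype.card {x // x ∈ (Sᶜ : Finset (Fin k))} = k - i := by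
      rw [Fintype.card_coe, hSc]
    have hW := f_card_eq {x // x ∈ (Sᶜ : Finset (Fin k))} (n / m ^ i) (m + 1)
    rw [hcardc] at hW
    rw [← hW]
    have hSne : S.Nonempty := card_pos.1 (by rw [hScard]; exact hi1)
    have hmn : m ≤ n := le_trans (Nat.le_self_pow (Nat.one_le_iff_ne_zero.mp hi1) m) (Nat.le_of_dvd hn hdvd)
    set ext : ({x // x ∈ (Sᶜ : Finset (Fin k))} → ℕ) → (Fin k → ℕ) :=
      fun w a => if h : a ∈ (Sᶜ : Finset (Fin k)) then w ⟨a, h⟩ else m with hext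
    apply Finset.card_bij'
      (fun v _ => fun j : {x // x ∈ (Sᶜ : Finset (Fin k))} => v j)
      (fun w _ => ext w)
    · -- forward membership
      intro v hv
      simp only [mem_filter] at hv
      obtain ⟨⟨⟨hvT, hμv⟩, hciv⟩, hSvv⟩ := hv
      obtain ⟨h1, h2⟩ := hTmem v hvT
      have hvm : ∀ j, v j = m ↔ j ∈ S := by
        intro j
        rw [← hSvv, hSv, mem_filter]
        simp
      have hprodS : ∏ j ∈ S, v j = m ^ i := by
        rw [← hScard]
        exact Finset.prod_eq_pow_card (fun j hj => (hvm j).2 hj)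
      have hprodSc : ∏ j ∈ Sᶜ, v j = n / m ^ i := by
        have := Finset.prod_compl_mul_prod S v
        rw [hprodS, h2] at this
        exact (Nat.div_eq_of_eq_mul_left hmpow this.symm).symm
      simp only [mem_filter, Fintype.mem_piFinset, mem_Icc]
      constructor
      · rintro ⟨j, hj⟩
        have hjS : j ∉ S := by simpa using hj
        constructor
        · have h1' : m ≤ v j := hμv ▸ hμle v j
          have h2' : v j ≠ m := fun h => hjS ((hvm j).1 h)
          exact Nat.lt_of_le_of_ne h1' (fun h => h2' h.symm)
        · have hdvd2 : v j * m ^ i ∣ n := by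
            have hsub : insert j S ⊆ univ := subset_univ _
            have := Finset.prod_dvd_prod_of_subset (insert j S) univ v hsub
            rwa [Finset.prod_insert hjS, hprodS, h2] at this
          rw [Nat.le_div_iff_mul_le hmpow]
          exact Nat.le_of_dvd hn hdvd2
      · rw [← hprodSc]
        exact Finset.prod_coe_sort Sᶜ v
    · -- backward membership
      intro w hw
      simp only [mem_filter, Fintype.mem_piFinset, mem_Icc] at hw
      obtain ⟨hw1, hw2⟩ := hw
      have hvm' : ∀ a, ext w a = m ↔ a ∈ S := by
        intro a
        rw [hext]
        simp only
        split
        · next h =>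
          have h1' := (hw1 ⟨a, h⟩).1
          have h2' : a ∉ S := by simpa using h
          constructor
          · intro he; exact absurd he (Nat.ne_of_gt h1')
          · intro he; exact absurd he h2'
        · next h =>
          have : a ∈ S := by simpa using h
          simp [this]
      have hge : ∀ a, m ≤ ext w a := by
        intro a
        rw [hext]
        simp only
        split
        · next h =>
          have h1' := (hw1 ⟨a, h⟩).1
          exact le_trans (Nat.le_succ m) h1'
        · exact le_rfl
      simp only [mem_filter]
      refine ⟨⟨⟨?_, ?_⟩, ?_⟩, ?_⟩
      · -- ∈ T
        simp only [hT, mem_filter, Fintype.mem_piFinset, mem_Icc]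
        constructor
        · intro a
          rw [hext]; simp only
          split
          · next h =>
            have h1' := hw1 ⟨a, h⟩
            exact ⟨le_trans (le_trans hm.1 (Nat.le_succ m)) h1'.1,
              le_trans h1'.2 (Nat.div_le_self _ _)⟩
          · exact ⟨hm.1, hmn⟩
        · rw [← Finset.prod_compl_mul_prod S]
          have e1 : ∏ a ∈ S, ext w a = m ^ i := by
            rw [← hScard]
            refine Finset.prod_eq_pow_card (fun a ha => ?_)
            exact (hvm' a).2 ha
          have e2 : ∏ a ∈ Sᶜ, ext w a = n / m ^ i := by
            rw [← Finset.prod_coe_sort Sᶜ, ← hw2]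
            apply Finset.prod_congr rfl
            intro a _
            rw [hext]
            simp only [dif_pos a.2]
          rw [e1, e2, Nat.div_mul_cancel hdvd]
      · -- μ = m
        apply le_antisymm
        · obtain ⟨j0, hj0⟩ := hSne
          have h' := hμle (ext w) j0
          rwa [(hvm' j0).2 hj0] at h'
        · exact le_inf' _ _ (fun a _ => hge a)
      · -- ci = i
        have hSveq : Sv (ext w) = S := by
          show filter (fun j => ext w j = m) univ = S
          ext a
          simp only [mem_filter, mem_univ, true_and]
          exact hvm' a
        show (Sv (ext w)).card = i
        rw [hSveq, hScard]
      · -- Sv = S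
        show filter (fun j => ext w j = m) univ = S
        ext a
        simp only [mem_filter, mem_univ, true_and]
        exact hvm' a
    · -- left inverse
      intro v hv
      simp only [mem_filter] at hv
      obtain ⟨⟨⟨hvT, hμv⟩, hciv⟩, hSvv⟩ := hv
      funext a
      rw [hext]
      simp only
      split
      · rfl
      · next h =>
        have haS : a ∈ S := by simpa using h
        have : a ∈ Sv v := hSvv ▸ haS
        simp only [hSv, mem_filter] at this
        exact this.2.symm
    · -- right inverse
      intro w hw
      funext j
      rw [hext]
      simp only [dif_pos j.2]
  rw [Finset.sum_congr rfl key, Finset.sum_const, Finset.card_powersetCard,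
    card_univ, Fintype.card_fin, smul_eq_mul]
end

section
/- For every real x ≥ 1, every positive integer l, and every integer k ≥ 2, F_k(x,l) = Σ_{m=l}^{⌊x^{1/k}⌋} Σ_{i=1}^{k} C(k,i) · F_{k−i}(x/m^i, m+1). -/
open Finset

def T (k N l : ℕ) : Finset (Fin k → ℕ) :=
  (Fintype.piFinset fun _ : Fin k => Finset.Icc l N).filter fun v => ∏ i, v i ≤ N

lemma memT {k N l : ℕ} (v : Fin k → ℕ) :
    v ∈ T k N l ↔ (∀ j, l ≤ v j ∧ v j ≤ N) ∧ ∏ j, v j ≤ N := by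
  simp [T, Fintype.mem_piFinset, Finset.mem_Icc]

def minv {k : ℕ} [Nonempty (Fin k)] (v : Fin k → ℕ) : ℕ :=
  Finset.univ.inf' Finset.univ_nonempty v

lemma fiber_card_s13 {k : ℕ} [Nonempty (Fin k)] (N l m i : ℕ) (hl : 1 ≤ l) (hlm : l ≤ m)
    (hmN : m ≤ N) (hi : 1 ≤ i) (hik : i ≤ k) (s : Finset (Fin k)) (hs : s.card = i) :
    (((T k N l).filter fun v => minv v = m ∧ (univ.filter fun j => v j = m) = s)).card
      = (T (k - i) (N / m ^ i) (m + 1)).card := by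
  have hm1 : 1 ≤ m := le_trans hl hlm
  have hmp : 0 < m ^ i := Nat.pow_pos (n := i) hm1
  have hsne : s.Nonempty := Finset.card_pos.mp (hs ▸ hi)
  have hcc : (sᶜ).card = k - i := by
    rw [Finset.card_compl, Fintype.card_fin, hs]
  let e : {j // j ∈ sᶜ} ≃ Fin (k - i) := (sᶜ).equivFin.trans (finCongr hcc)
  have hprod : ∀ v : Fin k → ℕ, ∏ j, v j = (∏ j ∈ s, v j) * ∏ t, v (e.symm t) := by
    intro v
    rw [← Finset.prod_mul_prod_compl s v]
    congr 1
    rw [← Finset.prod_coe_sort (sᶜ) v]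
    exact (Equiv.prod_comp e.symm (fun a => v ↑a)).symm
  -- characterization of the fiber
  have hD : ∀ v : Fin k → ℕ,
      (v ∈ T k N l ∧ minv v = m ∧ (univ.filter fun j => v j = m) = s) ↔
      ((∀ j ∈ s, v j = m) ∧ (∀ j, j ∉ s → m + 1 ≤ v j ∧ v j ≤ N) ∧ ∏ j, v j ≤ N) := by
    intro v
    constructor
    · rintro ⟨hT, hmin, hset⟩
      rw [memT] at hT
      have hmem : ∀ j, v j = m ↔ j ∈ s := by
        intro j
        rw [← hset, Finset.mem_filter]
        simp
      refine ⟨fun j hj => (hmem j).mpr hj, fun j hj => ⟨?_, (hT.1 j).2⟩, hT.2⟩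
      have h1 : v j ≠ m := fun h => hj ((hmem j).mp h)
      have h2 : m ≤ v j := hmin ▸ Finset.inf'_le v (Finset.mem_univ j)
      omega
    · rintro ⟨h1, h2, h3⟩
      have hmin : minv v = m := by
        obtain ⟨j0, hj0⟩ := hsne
        apply le_antisymm
        · exact (h1 j0 hj0) ▸ Finset.inf'_le v (Finset.mem_univ j0)
        · apply Finset.le_inf'
          intro j _
          by_cases hj : j ∈ s
          · exact (h1 j hj).ge
          · exact le_trans (Nat.le_succ m) (h2 j hj).1
      refine ⟨(memT v).mpr ⟨fun j => ?_, h3⟩, hmin, ?_⟩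
      · by_cases hj : j ∈ s
        · exact ⟨(h1 j hj) ▸ hlm, (h1 j hj) ▸ hmN⟩
        · exact ⟨le_trans hlm (le_trans (Nat.le_succ m) (h2 j hj).1), (h2 j hj).2⟩
      · ext j
        simp only [Finset.mem_filter, Finset.mem_univ, true_and]
        constructor
        · intro h
          by_contra hj
          have := (h2 j hj).1
          omega
        · exact h1 j
  have hkey : ∀ (w : Fin (k - i) → ℕ) (t : Fin (k - i)),
      (fun j => if h : j ∈ sᶜ then w (e ⟨j, h⟩) else m) ((e.symm t : {j // j ∈ sᶜ}) : Fin k) = w t := by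
    intro w t
    show (if h : ((e.symm t : {j // j ∈ sᶜ}) : Fin k) ∈ sᶜ then w (e ⟨_, h⟩) else m) = w t
    rw [dif_pos (e.symm t).2, Subtype.coe_eta, e.apply_symm_apply]
  apply Finset.card_bij' (fun v _ => fun t => v (e.symm t))
      (fun w _ => fun j => if h : j ∈ sᶜ then w (e ⟨j, h⟩) else m)
  · -- forward maps into T'
    intro v hv
    rw [Finset.mem_filter] at hv
    obtain ⟨h1, h2, h3⟩ := (hD v).mp hv
    have hoff : ∀ t : Fin (k - i), m + 1 ≤ v (e.symm t) ∧ v (e.symm t) ≤ N := by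
      intro t
      exact h2 _ (Finset.mem_compl.mp (e.symm t).2)
    have hps : ∏ j ∈ s, v j = m ^ i := by
      rw [Finset.prod_congr rfl h1, Finset.prod_const, hs]
    have hpw1 : 1 ≤ ∏ t, v (e.symm t) :=
      Finset.one_le_prod' fun t _ => by have := (hoff t).1; omega
    have hple : ∏ t, v (e.symm t) ≤ N / m ^ i := by
      rw [Nat.le_div_iff_mul_le hmp, mul_comm, ← hps, ← hprod v]
      exact h3
    rw [memT]
    refine ⟨fun t => ⟨(hoff t).1, ?_⟩, hple⟩
    have hd : v (e.symm t) ∣ ∏ t', v (e.symm t') :=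
      Finset.dvd_prod_of_mem _ (Finset.mem_univ t)
    exact le_trans (Nat.le_of_dvd hpw1 hd) hple
  · -- backward maps into D
    intro w hw
    rw [memT] at hw
    rw [Finset.mem_filter]
    apply (hD (fun j => if h : j ∈ sᶜ then w (e ⟨j, h⟩) else m)).mpr
    refine ⟨fun j hj => ?_, fun j hj => ?_, ?_⟩
    · show (if h : j ∈ sᶜ then w (e ⟨j, h⟩) else m) = m
      rw [dif_neg (by simpa using hj)]
    · have hj' : j ∈ sᶜ := Finset.mem_compl.mpr hj
      show m + 1 ≤ (if h : j ∈ sᶜ then w (e ⟨j, h⟩) else m) ∧ (if h : j ∈ sᶜ then w (e ⟨j, h⟩) else m) ≤ N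
      rw [dif_pos hj']
      refine ⟨(hw.1 _).1, le_trans (hw.1 _).2 (Nat.div_le_self N (m ^ i))⟩
    · rw [hprod]
      have h1 : ∏ j ∈ s, (fun j => if h : j ∈ sᶜ then w (e ⟨j, h⟩) else m) j = m ^ i := by
        have hcon : ∀ j ∈ s, (fun j => if h : j ∈ sᶜ then w (e ⟨j, h⟩) else m) j = m := by
          intro j hj
          show (if h : j ∈ sᶜ then w (e ⟨j, h⟩) else m) = m
          rw [dif_neg (by simpa using hj)]
        rw [Finset.prod_congr rfl hcon, Finset.prod_const, hs]
      rw [h1, Finset.prod_congr rfl (fun t _ => hkey w t)]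
      calc m ^ i * ∏ t, w t ≤ m ^ i * (N / m ^ i) :=
            Nat.mul_le_mul_left _ hw.2
        _ ≤ N := by rw [mul_comm]; exact Nat.div_mul_le_self N (m ^ i)
  · -- left inverse
    intro v hv
    funext j
    by_cases hj : j ∈ sᶜ
    · rw [dif_pos hj]
      show v ((e.symm (e ⟨j, hj⟩)) : Fin k) = v j
      rw [e.symm_apply_apply]
    · rw [dif_neg hj]
      rw [Finset.mem_filter] at hv
      obtain ⟨h1, -, -⟩ := (hD v).mp hv
      exact (h1 j (by simpa using hj)).symm
  · -- right inverse
    intro w hw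
    funext t
    exact hkey w t

lemma lemA (k l : ℕ) (hl : 1 ≤ l) (x : ℝ) : F k x l = (T k ⌊x⌋₊ l).card := by
  set N := ⌊x⌋₊ with hN
  have H : ∀ v ∈ T k N l, (∏ i, v i) ∈ Finset.Icc 1 N := by
    intro v hv
    simp only [T, Finset.mem_filter, Fintype.mem_piFinset, Finset.mem_Icc] at hv ⊢
    refine ⟨Finset.one_le_prod' fun j _ => le_trans hl (hv.1 j).1, hv.2⟩
  rw [F, Finset.card_eq_sum_card_fiberwise H]
  refine Finset.sum_congr rfl fun n hn => ?_
  rw [Finset.mem_Icc] at hn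
  unfold f T
  rw [Finset.filter_filter]
  congr 1
  ext v
  simp only [Finset.mem_filter, Fintype.mem_piFinset, Finset.mem_Icc]
  constructor
  · intro h
    obtain ⟨h1, h3⟩ := h
    have hpn : ∏ i, v i ≤ N := by rw [h3]; exact hn.2
    refine ⟨fun j => ⟨(h1 j).1, ?_⟩, hpn, h3⟩
    exact le_trans (h1 j).2 hn.2
  · intro h
    obtain ⟨h1, hle, h3⟩ := h
    refine ⟨fun j => ⟨(h1 j).1, ?_⟩, h3⟩
    have hd : v j ∣ ∏ i, v i := Finset.dvd_prod_of_mem v (Finset.mem_univ j)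
    rw [h3] at hd
    exact Nat.le_of_dvd hn.1 hd

theorem stmt13 (x : ℝ) (hx : 1 ≤ x) (l k : ℕ) (hl : 0 < l) (hk : 2 ≤ k) :
    F k x l =
      ∑ m ∈ Finset.Icc l ⌊x ^ (1 / (k : ℝ))⌋₊,
        ∑ i ∈ Finset.Icc 1 k,
          Nat.choose k i * F (k - i) (x / (m : ℝ) ^ i) (m + 1) := by
  haveI : Nonempty (Fin k) := ⟨⟨0, by omega⟩⟩
  have hx0 : (0:ℝ) ≤ x := by linarith
  have hk0 : (0:ℝ) < (k:ℝ) := by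
    have : 0 < k := by omega
    exact_mod_cast this
  set N := ⌊x⌋₊ with hNdef
  set M := ⌊x ^ (1 / (k : ℝ))⌋₊ with hMdef
  have hxN : (N : ℝ) ≤ x := Nat.floor_le hx0
  have hMN : M ≤ N := by
    apply Nat.floor_le_floor
    calc x ^ (1 / (k:ℝ)) ≤ x ^ (1:ℝ) := by
          apply Real.rpow_le_rpow_of_exponent_le hx
          rw [div_le_one hk0]
          exact_mod_cast (by omega : 1 ≤ k)
      _ = x := Real.rpow_one x
  rw [lemA k l hl x, ← hNdef]
  have H1 : ∀ v ∈ T k N l, minv v ∈ Finset.Icc l M := by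
    intro v hv
    rw [memT] at hv
    rw [Finset.mem_Icc]
    constructor
    · exact Finset.le_inf' _ v fun j _ => (hv.1 j).1
    · apply Nat.le_floor
      have hpow : (minv v) ^ k ≤ N := by
        calc (minv v) ^ k = ∏ _j : Fin k, minv v := by
              rw [Finset.prod_const, Finset.card_univ, Fintype.card_fin]
          _ ≤ ∏ j, v j := Finset.prod_le_prod' fun j _ => Finset.inf'_le v (Finset.mem_univ j)
          _ ≤ N := hv.2
      have hle : ((minv v : ℝ)) ^ k ≤ x := by
        calc ((minv v : ℝ)) ^ k = (((minv v) ^ k : ℕ) : ℝ) := by push_cast; ring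
          _ ≤ (N : ℝ) := by exact_mod_cast hpow
          _ ≤ x := hxN
      have h1 : (minv v : ℝ) = (((minv v : ℝ)) ^ (k:ℕ)) ^ (1/(k:ℝ)) := by
        rw [← Real.rpow_natCast ((minv v : ℝ)) k, ← Real.rpow_mul (Nat.cast_nonneg _),
          mul_one_div, div_self (ne_of_gt hk0), Real.rpow_one]
      rw [h1]
      exact Real.rpow_le_rpow (by positivity) hle (by positivity)
  rw [Finset.card_eq_sum_card_fiberwise H1]
  refine Finset.sum_congr rfl fun m hm => ?_
  rw [Finset.mem_Icc] at hm
  have hmN : m ≤ N := le_trans hm.2 hMN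
  have H2 : ∀ v ∈ (T k N l).filter (fun v => minv v = m),
      (Finset.univ.filter fun j => v j = m).card ∈ Finset.Icc 1 k := by
    intro v hv
    rw [Finset.mem_filter] at hv
    rw [Finset.mem_Icc]
    constructor
    · obtain ⟨j, -, hj⟩ := Finset.exists_mem_eq_inf' (Finset.univ_nonempty) v
      apply Finset.card_pos.mpr
      exact ⟨j, Finset.mem_filter.mpr ⟨Finset.mem_univ j, by rw [← hj, ← hv.2]; rfl⟩⟩
    · exact le_trans (Finset.card_filter_le _ _) (by rw [Finset.card_univ, Fintype.card_fin])
  rw [Finset.card_eq_sum_card_fiberwise H2]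
  refine Finset.sum_congr rfl fun i hi => ?_
  rw [Finset.mem_Icc] at hi
  rw [Finset.filter_filter]
  have H3 : ∀ v ∈ (T k N l).filter
      (fun v => minv v = m ∧ (Finset.univ.filter fun j => v j = m).card = i),
      (Finset.univ.filter fun j => v j = m) ∈ Finset.powersetCard i (Finset.univ : Finset (Fin k)) := by
    intro v hv
    rw [Finset.mem_filter] at hv
    rw [Finset.mem_powersetCard]
    exact ⟨Finset.subset_univ _, hv.2.2⟩
  rw [Finset.card_eq_sum_card_fiberwise H3]
  have Hfib : ∀ s ∈ Finset.powersetCard i (Finset.univ : Finset (Fin k)),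
      (((T k N l).filter
        (fun v => minv v = m ∧ (Finset.univ.filter fun j => v j = m).card = i)).filter
        (fun v => (Finset.univ.filter fun j => v j = m) = s)).card
      = (T (k - i) (N / m ^ i) (m + 1)).card := by
    intro s hsmem
    rw [Finset.mem_powersetCard] at hsmem
    obtain ⟨-, hs⟩ := hsmem
    rw [Finset.filter_filter]
    have hset : (T k N l).filter
        (fun v => (minv v = m ∧ (Finset.univ.filter fun j => v j = m).card = i) ∧
          (Finset.univ.filter fun j => v j = m) = s)
        = (T k N l).filter
        (fun v => minv v = m ∧ (Finset.univ.filter fun j => v j = m) = s) := by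
      apply Finset.filter_congr
      intro v _
      constructor
      · rintro ⟨⟨a, b⟩, c⟩; exact ⟨a, c⟩
      · rintro ⟨a, c⟩; exact ⟨⟨a, c ▸ hs⟩, c⟩
    rw [hset]
    exact fiber_card_s13 N l m i hl hm.1 hmN hi.1 hi.2 s hs
  rw [Finset.sum_congr rfl Hfib, Finset.sum_const, Finset.card_powersetCard,
    Finset.card_univ, Fintype.card_fin, smul_eq_mul]
  congr 1
  rw [lemA (k - i) (m + 1) (by omega) (x / (m : ℝ) ^ i)]
  congr 1
  rw [show ((m:ℝ)) ^ i = ((m ^ i : ℕ) : ℝ) by push_cast; ring, Nat.floor_div_natCast]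
end
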